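/- Let M be a 3×3 matrix of linear forms over k with det M = c·F, c ≠ 0, and let M̃ = adj(M) be its classical adjugate. Then every entry of M̃ is a homogeneous polynomial of degree 2 in z0,z1,z2,z3, and at every smooth point P of the surface {F = 0} the matrix M̃(P) has rank exactly 1. -/

import Mathlib

open MvPolynomial
open Matrix

namespace Stmt1Aux

open Matrix

lemma aux_pderiv_det3 {k : Type*} [Field k]
    (M : Matrix (Fin 3) (Fin 3) (MvPolynomial (Fin 4) k)) (t : Fin 4) :
    pderiv t M.det =
      ∑ r : Fin 3, (M.updateRow r (fun j => pderiv t (M r j))).det := by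
  simp only [Matrix.det_fin_three, Fin.sum_univ_three, Matrix.updateRow_apply,
    Matrix.updateRow_self]
  simp only [map_add, map_sub, pderiv_mul]
  simp only [show (0 : Fin 3) ≠ 1 by decide, show (0 : Fin 3) ≠ 2 by decide,
    show (1 : Fin 3) ≠ 0 by decide, show (1 : Fin 3) ≠ 2 by decide,
    show (2 : Fin 3) ≠ 0 by decide, show (2 : Fin 3) ≠ 1 by decide, if_true, if_false,
    if_neg, if_pos]
  ring

lemma aux_rank_add_le {k : Type*} [Field k] (A B : Matrix (Fin 3) (Fin 3) k) :
    (A + B).rank ≤ A.rank + B.rank := by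
  classical
  have h : (A + B).mulVecLin = A.mulVecLin + B.mulVecLin := Matrix.mulVecLin_add A B
  have hr : LinearMap.range (A + B).mulVecLin ≤
      LinearMap.range A.mulVecLin ⊔ LinearMap.range B.mulVecLin := by
    rw [h]
    rintro x ⟨v, rfl⟩
    exact Submodule.add_mem_sup ⟨v, rfl⟩ ⟨v, rfl⟩
  rw [Matrix.rank, Matrix.rank, Matrix.rank]
  exact le_trans (Submodule.finrank_mono hr)
    (Submodule.finrank_add_le_finrank_add_finrank _ _)


end Stmt1Aux

set_option maxHeartbeats 1000000 in
/-- For a determinantal representation `M` of a cubic surface `F = 0`, every entry of the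
adjugate `adj M` is homogeneous of degree 2, and at every smooth point of the surface the
evaluated adjugate has rank exactly 1. -/
theorem stmt1 {k : Type*} [Field k] [IsAlgClosed k]
    (F : MvPolynomial (Fin 4) k) (hF : F.IsHomogeneous 3)
    (M : Matrix (Fin 3) (Fin 3) (MvPolynomial (Fin 4) k))
    (hM : ∀ i j, (M i j).IsHomogeneous 1)
    (c : k) (hc : c ≠ 0) (hdet : M.det = C c * F) :
    (∀ i j, (M.adjugate i j).IsHomogeneous 2) ∧
    (∀ P : Fin 4 → k, eval P F = 0 → (∃ i, eval P (pderiv i F) ≠ 0) →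
      ((M.adjugate).map (eval P)).rank = 1) := by
  constructor
  · have hom2 : ∀ a b : MvPolynomial (Fin 4) k, a.IsHomogeneous 1 → b.IsHomogeneous 1 →
        (a * b).IsHomogeneous 2 := fun a b ha hb => by simpa using ha.mul hb
    intro i j
    rw [Matrix.adjugate_fin_three]
    fin_cases i <;> fin_cases j <;> simp only [Matrix.cons_val_zero, Matrix.cons_val_one,
        Matrix.head_cons, Matrix.cons_val_two, Matrix.tail_cons, Matrix.cons_val',
        Matrix.empty_val', Matrix.cons_val_fin_one, Matrix.of_apply, Fin.zero_eta, Fin.mk_one,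
        Fin.reduceFinMk, Matrix.vecHead, neg_add_eq_sub] <;>
      first
        | exact (hom2 _ _ (hM _ _) (hM _ _)).sub (hom2 _ _ (hM _ _) (hM _ _))
        | exact ((hom2 _ _ (hM _ _) (hM _ _)).neg).add (hom2 _ _ (hM _ _) (hM _ _))
  · classical
    rintro P hP ⟨t, ht⟩
    set A : Matrix (Fin 3) (Fin 3) k := M.map (eval P) with hA
    -- the mapped adjugate is the adjugate of the mapped matrix
    have hmap : (M.adjugate).map (eval P) = A.adjugate := by
      have := (eval P : MvPolynomial (Fin 4) k →+* k).map_adjugate M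
      simpa [RingHom.mapMatrix_apply] using this
    set B : Matrix (Fin 3) (Fin 3) k := A.adjugate with hB
    -- det A = 0
    have hdetA : A.det = 0 := by
      have h1 : A.det = eval P M.det := ((eval P : MvPolynomial (Fin 4) k →+* k).map_det M).symm
      rw [h1, hdet]
      simp [hP]
    -- B ≠ 0
    have hBne : B ≠ 0 := by
      intro h0
      -- cramer Aᵀ vanishes
      have hcram : ∀ w : Fin 3 → k, Aᵀ.cramer w = 0 := by
        intro w
        have hw : w = ∑ r : Fin 3, w r • (Pi.single r 1 : Fin 3 → k) := by
          ext s
          simp [Pi.single_apply]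
        rw [hw, map_sum]
        have hsingle : ∀ r : Fin 3, Aᵀ.cramer (Pi.single r (1 : k)) = B r := by
          intro r
          have := congrFun (Matrix.adjugate_def A) r
          exact this.symm
        refine Finset.sum_eq_zero fun r _ => ?_
        rw [LinearMap.map_smul, hsingle r, h0]
        ext s
        simp
      -- hence every row-update determinant of A vanishes
      have hupd : ∀ (r : Fin 3) (w : Fin 3 → k), (A.updateRow r w).det = 0 := by
        intro r w
        rw [← Matrix.cramer_transpose_apply, hcram]
        rfl
      -- Jacobi: c * ∂F/∂t (P) = sum of such determinants = 0
      have hkey : c * eval P (pderiv t F) = 0 := by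
        have h1 : pderiv t M.det = C c * pderiv t F := by
          rw [hdet, pderiv_C_mul]
        have h2 := Stmt1Aux.aux_pderiv_det3 M t
        have h3 : eval P (pderiv t M.det) = c * eval P (pderiv t F) := by
          rw [h1]; simp
        rw [← h3, h2, map_sum]
        have h4 : ∀ r : Fin 3,
            eval P (M.updateRow r (fun j => pderiv t (M r j))).det = 0 := by
          intro r
          have h5 : eval P (M.updateRow r (fun j => pderiv t (M r j))).det
              = ((M.updateRow r (fun j => pderiv t (M r j))).map (eval P)).det :=
            (eval P : MvPolynomial (Fin 4) k →+* k).map_det _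
          rw [h5, Matrix.map_updateRow]
          exact hupd r _
        simp [h4]
      exact (mul_ne_zero hc ht) hkey
    -- pick a nonzero entry of B
    obtain ⟨i, j, hij⟩ : ∃ i j, B i j ≠ 0 := by
      by_contra h
      push_neg at h
      exact hBne (by ext i j; simpa using h i j)
    -- the update matrix U is invertible
    set U : Matrix (Fin 3) (Fin 3) k := A.updateRow j (Pi.single i 1) with hU
    have hUdet : U.det ≠ 0 := by
      rw [← Matrix.adjugate_apply]
      exact hij
    have hUrank : U.rank = 3 := by
      have : IsUnit U := by
        rw [Matrix.isUnit_iff_isUnit_det]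
        exact isUnit_iff_ne_zero.mpr hUdet
      simpa using Matrix.rank_of_isUnit U this
    -- decompose U = D * A + S
    set d : Fin 3 → k := fun r => if r = j then 0 else 1 with hd
    set S : Matrix (Fin 3) (Fin 3) k := Matrix.single j i 1 with hS
    have hdecomp : U = Matrix.diagonal d * A + S := by
      ext r s
      by_cases hrj : r = j
      · subst hrj
        simp [hU, hS, hd, Matrix.diagonal_mul, Matrix.single, Pi.single_apply, eq_comm]
      · simp only [hU, hS, Matrix.updateRow_ne hrj, Matrix.add_apply,
          Matrix.diagonal_mul, hd, hrj, if_false, one_mul,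
          Matrix.single, Matrix.of_apply, ite_and]
        rw [if_neg (fun h => hrj h.symm)]
        ring
    -- rank S ≤ 1
    have hSrank : S.rank ≤ 1 := by
      have hrange : LinearMap.range S.mulVecLin ≤
          Submodule.span k {(Pi.single j 1 : Fin 3 → k)} := by
        rintro x ⟨v, rfl⟩
        have hv : S.mulVecLin v = v i • (Pi.single j 1 : Fin 3 → k) := by
          ext r
          simp [hS, Matrix.mulVecLin_apply, Matrix.mulVec, dotProduct,
            Matrix.single, Pi.single_apply, ite_and, Matrix.of_apply, mul_comm,
            eq_comm]
        rw [hv]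
        exact Submodule.smul_mem _ _ (Submodule.mem_span_singleton_self _)
      have hx : (Pi.single j 1 : Fin 3 → k) ≠ 0 := by
        intro h
        have := congrFun h j
        simp at this
      have h1 : S.rank ≤ Module.finrank k
          (Submodule.span k {(Pi.single j 1 : Fin 3 → k)}) := by
        rw [Matrix.rank]
        exact Submodule.finrank_mono hrange
      rwa [finrank_span_singleton hx] at h1
    -- rank A ≥ 2
    have hArank : 2 ≤ A.rank := by
      have h1 : U.rank ≤ (Matrix.diagonal d * A).rank + S.rank := by
        rw [hdecomp]
        exact Stmt1Aux.aux_rank_add_le _ _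
      have h2 : (Matrix.diagonal d * A).rank ≤ A.rank := Matrix.rank_mul_le_right _ _
      omega
    -- A * B = 0 hence rank A + rank B ≤ 3
    have hAB : A * B = 0 := by
      rw [hB, Matrix.mul_adjugate, hdetA]
      simp
    have hsum : A.rank + B.rank ≤ 3 := by
      simpa using Matrix.rank_add_rank_le_card_of_mul_eq_zero hAB
    -- rank B ≥ 1
    have hBpos : 1 ≤ B.rank := by
      rw [Nat.one_le_iff_ne_zero]
      intro h0
      have hbot : LinearMap.range B.mulVecLin = ⊥ := by
        rw [← Submodule.finrank_eq_zero]
        exact h0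
      have hzero : B.mulVecLin = 0 := LinearMap.range_eq_bot.mp hbot
      have hcol : B.mulVecLin (Pi.single j 1) i = B i j := by
        simp [Matrix.mulVecLin_apply, Matrix.mulVec, dotProduct, Pi.single_apply]
      rw [hzero] at hcol
      simp at hcol
      exact hij hcol.symm
    rw [hmap]
    omega
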